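/- Let Sq¹ and Sq² act on (P₄)*, the divided power algebra Γ(a₁,a₂,a₃,a₄) over 𝔽₂, on the right via (a_i^{(n)})Sq^t = C(n−t,t)·a_i^{(n−t)} and the Cartan formula. Then the element ζ = a₁^{(1)}a₂^{(3)}a₃^{(3)}a₄^{(2)} + a₁^{(1)}a₂^{(3)}a₃^{(4)}a₄^{(1)} + a₁^{(1)}a₂^{(5)}a₃^{(2)}a₄^{(1)} + a₁^{(1)}a₂^{(6)}a₃^{(1)}a₄^{(1)} of degree 9 satisfies (ζ)Sq¹ = 0 and (ζ)Sq² = 0. -/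

import Mathlib

/-- The right Steenrod action of `Sq^t` on a basis element `∏ᵢ aᵢ^{(d i)}` of the divided
power algebra `Γ(a₁,a₂,a₃,a₄)` over `𝔽₂` (modeled as `(Fin 4 → ℕ) →₀ ZMod 2` on the basis of
exponent vectors), given by the Cartan formula together with
`(aᵢ^{(n)}) Sq^t = C(n-t, t) · aᵢ^{(n-t)}` (zero when `t > n`). -/
noncomputable def sqAct4 (t : ℕ) (d : Fin 4 → ℕ) : (Fin 4 → ℕ) →₀ ZMod 2 :=
  ∑ τ ∈ Finset.Nat.antidiagonalTuple 4 t,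
    ((∏ i, Nat.choose (d i - τ i) (τ i) : ℕ) : ZMod 2) •
      Finsupp.single (fun i => d i - τ i) (1 : ZMod 2)

/-- The linear extension of `sqAct4` to all of `Γ(a₁,…,a₄)`. -/
noncomputable def sqActL (t : ℕ) (ζ : (Fin 4 → ℕ) →₀ ZMod 2) : (Fin 4 → ℕ) →₀ ZMod 2 :=
  ζ.sum fun d c => c • sqAct4 t d

lemma had1 : Finset.Nat.antidiagonalTuple 4 1
    = {![1,0,0,0], ![0,1,0,0], ![0,0,1,0], ![0,0,0,1]} := by decide

lemma had2 : Finset.Nat.antidiagonalTuple 4 2 =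
    {![2,0,0,0], ![1,1,0,0], ![1,0,1,0], ![1,0,0,1], ![0,2,0,0], ![0,1,1,0],
     ![0,1,0,1], ![0,0,2,0], ![0,0,1,1], ![0,0,0,2]} := by decide

lemma e11 : sqAct4 1 ![1,3,3,2] = Finsupp.single ![1,3,3,1] 1 := by
  rw [sqAct4, had1, Finset.sum_insert (by decide), Finset.sum_insert (by decide),
    Finset.sum_insert (by decide), Finset.sum_singleton]
  norm_num [Fin.prod_univ_four, -Finsupp.single_mul]
  simp [show (2:ZMod 2) = 0 by decide]
  rw [show (fun i => ![1,3,3,2] i - ![0,0,0,1] i) = ![1,3,3,1] from by decide]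

lemma e12 : sqAct4 1 ![1,3,4,1] = Finsupp.single ![1,3,3,1] 1 := by
  rw [sqAct4, had1, Finset.sum_insert (by decide), Finset.sum_insert (by decide),
    Finset.sum_insert (by decide), Finset.sum_singleton]
  norm_num [Fin.prod_univ_four, -Finsupp.single_mul]
  simp [show (2:ZMod 2) = 0 by decide, show (3:ZMod 2) = 1 by decide]
  rw [show (fun i => ![1,3,4,1] i - ![0,0,1,0] i) = ![1,3,3,1] from by decide]

lemma e13 : sqAct4 1 ![1,5,2,1] = Finsupp.single ![1,5,1,1] 1 := by
  rw [sqAct4, had1, Finset.sum_insert (by decide), Finset.sum_insert (by decide),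
    Finset.sum_insert (by decide), Finset.sum_singleton]
  norm_num [Fin.prod_univ_four, -Finsupp.single_mul]
  simp [show (2:ZMod 2) = 0 by decide, show (4:ZMod 2) = 0 by decide]
  rw [show (fun i => ![1,5,2,1] i - ![0,0,1,0] i) = ![1,5,1,1] from by decide]

lemma e14 : sqAct4 1 ![1,6,1,1] = Finsupp.single ![1,5,1,1] 1 := by
  rw [sqAct4, had1, Finset.sum_insert (by decide), Finset.sum_insert (by decide),
    Finset.sum_insert (by decide), Finset.sum_singleton]
  norm_num [Fin.prod_univ_four, -Finsupp.single_mul]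
  simp [show (5:ZMod 2) = 1 by decide]
  rw [show (fun i => ![1,6,1,1] i - ![0,1,0,0] i) = ![1,5,1,1] from by decide]

lemma e21 : sqAct4 2 ![1,3,3,2] = 0 := by
  rw [sqAct4, had2, Finset.sum_insert (by decide), Finset.sum_insert (by decide),
    Finset.sum_insert (by decide), Finset.sum_insert (by decide), Finset.sum_insert (by decide),
    Finset.sum_insert (by decide), Finset.sum_insert (by decide), Finset.sum_insert (by decide),
    Finset.sum_insert (by decide), Finset.sum_singleton]
  norm_num [Fin.prod_univ_four, -Finsupp.single_mul]
  simp [show (2:ZMod 2) = 0 by decide, show (4:ZMod 2) = 0 by decide]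

lemma e22 : sqAct4 2 ![1,3,4,1] = Finsupp.single ![1,3,2,1] 1 := by
  rw [sqAct4, had2, Finset.sum_insert (by decide), Finset.sum_insert (by decide),
    Finset.sum_insert (by decide), Finset.sum_insert (by decide), Finset.sum_insert (by decide),
    Finset.sum_insert (by decide), Finset.sum_insert (by decide), Finset.sum_insert (by decide),
    Finset.sum_insert (by decide), Finset.sum_singleton]
  norm_num [Fin.prod_univ_four, -Finsupp.single_mul]
  simp [show (6:ZMod 2) = 0 by decide, show (2:ZMod 2) = 0 by decide, -Finsupp.single_mul]
  rw [show (fun i => ![1,3,4,1] i - ![0,0,2,0] i) = ![1,3,2,1] from by decide]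

lemma e23 : sqAct4 2 ![1,5,2,1] = Finsupp.single ![1,3,2,1] 1 := by
  rw [sqAct4, had2, Finset.sum_insert (by decide), Finset.sum_insert (by decide),
    Finset.sum_insert (by decide), Finset.sum_insert (by decide), Finset.sum_insert (by decide),
    Finset.sum_insert (by decide), Finset.sum_insert (by decide), Finset.sum_insert (by decide),
    Finset.sum_insert (by decide), Finset.sum_singleton]
  norm_num [Fin.prod_univ_four, -Finsupp.single_mul]
  simp [show (3:ZMod 2) = 1 by decide, show (4:ZMod 2) = 0 by decide]
  rw [show (fun i => ![1,5,2,1] i - ![0,2,0,0] i) = ![1,3,2,1] from by decide]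

lemma e24 : sqAct4 2 ![1,6,1,1] = 0 := by
  rw [sqAct4, had2, Finset.sum_insert (by decide), Finset.sum_insert (by decide),
    Finset.sum_insert (by decide), Finset.sum_insert (by decide), Finset.sum_insert (by decide),
    Finset.sum_insert (by decide), Finset.sum_insert (by decide), Finset.sum_insert (by decide),
    Finset.sum_insert (by decide), Finset.sum_singleton]
  norm_num [Fin.prod_univ_four, -Finsupp.single_mul]
  simp [-Finsupp.single_mul]
  decide

lemma sqActL_add (t : ℕ) (f g : (Fin 4 → ℕ) →₀ ZMod 2) :
    sqActL t (f + g) = sqActL t f + sqActL t g := by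
  unfold sqActL
  exact Finsupp.sum_add_index' (by simp) (by intros; rw [add_smul])

lemma sqActL_single (t : ℕ) (d : Fin 4 → ℕ) :
    sqActL t (Finsupp.single d 1) = sqAct4 t d := by
  unfold sqActL
  rw [Finsupp.sum_single_index (by simp), one_smul]

/-- The element
`ζ = a₁^{(1)}a₂^{(3)}a₃^{(3)}a₄^{(2)} + a₁^{(1)}a₂^{(3)}a₃^{(4)}a₄^{(1)}
   + a₁^{(1)}a₂^{(5)}a₃^{(2)}a₄^{(1)} + a₁^{(1)}a₂^{(6)}a₃^{(1)}a₄^{(1)}`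
of degree 9 satisfies `(ζ)Sq¹ = 0` and `(ζ)Sq² = 0`. -/
theorem stmt_12 :
    sqActL 1 (Finsupp.single ![1, 3, 3, 2] 1 + Finsupp.single ![1, 3, 4, 1] 1
        + Finsupp.single ![1, 5, 2, 1] 1 + Finsupp.single ![1, 6, 1, 1] 1) = 0 ∧
    sqActL 2 (Finsupp.single ![1, 3, 3, 2] 1 + Finsupp.single ![1, 3, 4, 1] 1
        + Finsupp.single ![1, 5, 2, 1] 1 + Finsupp.single ![1, 6, 1, 1] 1) = 0 := by
  constructor <;>
  · rw [sqActL_add, sqActL_add, sqActL_add, sqActL_single, sqActL_single, sqActL_single,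
      sqActL_single]
    first
    | rw [e11, e12, e13, e14]
    | rw [e21, e22, e23, e24]
    simp [← Finsupp.single_add, show (1+1:ZMod 2) = 0 by decide]
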